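/- Let A be the canonical aggregation matrix of a tree-based hierarchy with K constraints on N items. Then A has full row rank K. Moreover, each column of A has at most one entry equal to −1, and if the hierarchy is strict, each column of A also has at most one entry equal to +1. -/

import Mathlib

open Matrix Filter Topology

/-- A tree-based hierarchy in canonical form on items `Fin N` with `K` constraints.
Constraint `k` has parent item `parent k` and nonempty child set `children k`;
each item is a child in at most one constraint, and the height function satisfies
`H(c) = H(p_k) - 1` (equivalently `H(p_k) = H(c) + 1`) for every child `c` of `p_k`. -/
structure TreeHierarchy (N K : ℕ) where
  parent : Fin K → Fin N
  children : Fin K → Finset (Fin N)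
  children_nonempty : ∀ k, (children k).Nonempty
  parent_notMem : ∀ k, parent k ∉ children k
  child_unique : ∀ k j : Fin K, ∀ n : Fin N, n ∈ children k → n ∈ children j → k = j
  height : Fin N → ℕ
  height_child : ∀ k : Fin K, ∀ c ∈ children k, height (parent k) = height c + 1

variable {N K : ℕ}

/-- The canonical aggregation matrix of a tree-based hierarchy:
`A k (p_k) = 1`, `A k c = -1` for `c ∈ C_k`, and `0` otherwise. -/
noncomputable def aggMatrix (T : TreeHierarchy N K) : Matrix (Fin K) (Fin N) ℝ :=
  fun k n => if n = T.parent k then 1 else if n ∈ T.children k then -1 else 0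

lemma aggMatrix_rows_linearIndependent (T : TreeHierarchy N K) :
    LinearIndependent ℝ (aggMatrix T) := by
  refine (Fintype.linearIndependent_iff).2 ?_
  intro g hg
  -- strong induction on height of parent
  suffices H : ∀ h : ℕ, ∀ k : Fin K, T.height (T.parent k) = h → g k = 0 by
    intro k; exact H _ k rfl
  intro h
  induction h using Nat.strong_induction_on with
  | _ h IH =>
    intro k hk
    obtain ⟨c, hc⟩ := T.children_nonempty k
    have hgc := congrFun hg c
    have hentry : ∀ j : Fin K, aggMatrix T j c =
        (if c = T.parent j then (1:ℝ) else 0) + (if j = k then -1 else 0) := by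
      intro j
      by_cases h1 : c = T.parent j
      · have hjk : j ≠ k := by
          rintro rfl; exact T.parent_notMem j (h1 ▸ hc)
        simp [aggMatrix, h1, hjk]
      · by_cases h2 : j = k
        · subst h2
          simp [aggMatrix, h1, hc]
        · have h3 : c ∉ T.children j := fun hm => h2 (T.child_unique j k c hm hc)
          simp [aggMatrix, h1, h2, h3]
    have hsum : ∑ j, g j • aggMatrix T j c = 0 := by
      simpa using hgc
    rw [Finset.sum_congr rfl (fun j _ => by rw [hentry j])] at hsum
    simp only [smul_eq_mul, mul_add] at hsum
    rw [Finset.sum_add_distrib] at hsum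
    have h1 : ∑ j, g j * (if j = k then (-1:ℝ) else 0) = -g k := by
      simp [Finset.sum_ite_eq' Finset.univ k (fun j => -g j)]
    have h2 : ∑ j, g j * (if c = T.parent j then (1:ℝ) else 0) = 0 := by
      apply Finset.sum_eq_zero
      intro j _
      by_cases hp : c = T.parent j
      · have hh : T.height (T.parent j) < h := by
          have hkc := T.height_child k c hc
          rw [← hp]
          omega
        rw [IH _ hh j rfl]
        ring
      · simp [hp]
    rw [h1, h2] at hsum
    linarith

/-- The canonical aggregation matrix of a tree-based hierarchy has full row
rank `K`; each column has at most one entry equal to `-1`; and if the hierarchy is strict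
(each item is the parent of at most one constraint), each column also has at most one
entry equal to `+1`. -/
theorem aggMatrix_full_rank_and_columns (T : TreeHierarchy N K) :
    (aggMatrix T).rank = K ∧
    (∀ n : Fin N, ∀ i j : Fin K,
      aggMatrix T i n = -1 → aggMatrix T j n = -1 → i = j) ∧
    (Function.Injective T.parent →
      ∀ n : Fin N, ∀ i j : Fin K,
        aggMatrix T i n = 1 → aggMatrix T j n = 1 → i = j) := by
  refine ⟨?_, ?_, ?_⟩
  · have := (aggMatrix_rows_linearIndependent T).rank_matrix
    simp only [Fintype.card_fin] at this
    exact this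
  · intro n i j hi hj
    have hmi : n ∈ T.children i := by
      by_contra h
      by_cases hp : n = T.parent i <;> simp [aggMatrix, hp, h] at hi <;> norm_num at hi
    have hmj : n ∈ T.children j := by
      by_contra h
      by_cases hp : n = T.parent j <;> simp [aggMatrix, hp, h] at hj <;> norm_num at hj
    exact T.child_unique i j n hmi hmj
  · intro hinj n i j hi hj
    have hpi : n = T.parent i := by
      by_contra hp
      by_cases h : n ∈ T.children i <;> simp [aggMatrix, hp, h] at hi <;> norm_num at hi
    have hpj : n = T.parent j := by
      by_contra hp
      by_cases h : n ∈ T.children j <;> simp [aggMatrix, hp, h] at hj <;> norm_num at hj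
    exact hinj (hpi ▸ hpj)
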